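/- arXiv:2401.10257 — 4 statements merged into one kernel-verified Lean document; each statement's English description precedes it below -/
import Mathlib

section
/- Let Θ be a type, N ≥ 1, U : Θ → Fin N → ℝ a family of score functions, and p : Fin N → ℝ with ∑ᵢ pᵢ = 1. Define 𝒰(θ) = (1/N)·∑ᵢ U_θ(i), 𝒰_p(θ) = ∑ᵢ U_θ(i)·pᵢ, and Ĉov[U_θ, p] = ∑ᵢ (U_θ(i) − (1/N)∑ⱼU_θ(j))·(pᵢ − 1/N). If θ̃ ∈ Θ maximizes θ ↦ Ĉov[U_θ, p] (i.e. Ĉov[U_θ, p] ≤ Ĉov[U_θ̃, p] for all θ), then for every θ ∈ Θ, 𝒰_p(θ̃) − 𝒰_p(θ) ≥ 𝒰(θ̃) − 𝒰(θ) (second claim of Theorem 3 of the paper). -/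
/-- If `θ̃` maximizes the empirical covariance between the scores and the prior,
then the gain of the curriculum objective at `θ̃` over any `θ` dominates the gain
of the plain objective. -/
theorem curriculum_gain_ge_plain_gain
    {Θ : Type*} (N : ℕ) (hN : 1 ≤ N) (U : Θ → Fin N → ℝ) (p : Fin N → ℝ)
    (hp : ∑ i, p i = 1) (θopt : Θ)
    (hmax : ∀ θ : Θ,
      ∑ i, (U θ i - (1 / N) * ∑ j, U θ j) * (p i - 1 / N) ≤
        ∑ i, (U θopt i - (1 / N) * ∑ j, U θopt j) * (p i - 1 / N)) :
    ∀ θ : Θ,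
      (∑ i, U θopt i * p i) - (∑ i, U θ i * p i) ≥
        (1 / N) * (∑ i, U θopt i) - (1 / N) * (∑ i, U θ i) := by
  have hN0 : (N : ℝ) ≠ 0 := Nat.cast_ne_zero.mpr (by omega)
  have key : ∀ θ : Θ,
      ∑ i, (U θ i - (1 / N) * ∑ j, U θ j) * (p i - 1 / N)
        = (∑ i, U θ i * p i) - (1 / N) * ∑ i, U θ i := by
    intro θ
    have hcard : ∑ _i : Fin N, (1 / (N : ℝ)) = 1 := by
      simp [Finset.sum_const, Finset.card_univ]
      field_simp
    have expand : ∀ i : Fin N,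
        (U θ i - (1 / N) * ∑ j, U θ j) * (p i - 1 / N)
        = U θ i * p i - (1 / N) * U θ i - ((1 / N) * ∑ j, U θ j) * p i
          + ((1 / N) * ∑ j, U θ j) * (1 / N) := by
      intro i; ring
    rw [Finset.sum_congr rfl (fun i _ => expand i)]
    rw [Finset.sum_add_distrib, Finset.sum_sub_distrib, Finset.sum_sub_distrib,
      ← Finset.mul_sum, ← Finset.mul_sum, hp, Finset.sum_const, Finset.card_univ,
      Fintype.card_fin, nsmul_eq_mul]
    field_simp
    ring
  intro θ
  have h := hmax θ
  rw [key θ, key θopt] at h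
  linarith
end

section
/- Let Θ be a type, N ≥ 1, U : Θ → Fin N → ℝ, and θ̃ ∈ Θ with P = ∑ᵢ U_θ̃(i) > 0; set pᵢ = U_θ̃(i)/P. If θ̃ maximizes θ ↦ 𝒰(θ) = (1/N)·∑ᵢ U_θ(i), then for every θ ∈ Θ, 𝒰_p(θ) ≤ 𝒰(θ̃) + (1/P)·√(V̂ar[U_θ]·V̂ar[U_θ̃]), where 𝒰_p(θ) = ∑ᵢ U_θ(i)·pᵢ and V̂ar[V] = ∑ᵢ (Vᵢ − (1/N)∑ⱼVⱼ)² (upper bound established in the proof of Proposition 1 of the paper). -/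
/-- Cauchy–Schwarz style upper bound on the self-taught curriculum objective:
if `θ̃` maximizes the plain objective, then `𝒰_p(θ) ≤ 𝒰(θ̃) + (1/P)·√(Var[U_θ]·Var[U_θ̃])`. -/
theorem selfTaught_objective_upper_bound
    {Θ : Type*} (N : ℕ) (hN : 1 ≤ N) (U : Θ → Fin N → ℝ) (θopt : Θ)
    (hP : 0 < ∑ i, U θopt i)
    (hmax : ∀ θ : Θ, (1 / N) * (∑ i, U θ i) ≤ (1 / N) * (∑ i, U θopt i)) :
    ∀ θ : Θ,
      ∑ i, U θ i * (U θopt i / (∑ j, U θopt j)) ≤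
        (1 / N) * (∑ i, U θopt i) +
          (1 / (∑ j, U θopt j)) *
            Real.sqrt ((∑ i, (U θ i - (1 / N) * ∑ j, U θ j) ^ 2) *
              (∑ i, (U θopt i - (1 / N) * ∑ j, U θopt j) ^ 2)) := by
  intro θ
  set P : ℝ := ∑ j, U θopt j with hPdef
  have hNpos : (0:ℝ) < N := by exact_mod_cast Nat.lt_of_lt_of_le Nat.zero_lt_one hN
  set m : ℝ := (1 / N) * ∑ j, U θ j with hm
  set m' : ℝ := (1 / N) * ∑ j, U θopt j with hm'
  have hcov : ∑ i, (U θ i - m) * (U θopt i - m')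
      = (∑ i, U θ i * U θopt i) - m * P - m' * (∑ j, U θ j) + N * (m * m') := by
    have : ∀ i, (U θ i - m) * (U θopt i - m')
        = U θ i * U θopt i - m * U θopt i - m' * U θ i + m * m' := by
      intro i; ring
    simp only [this, Finset.sum_add_distrib, Finset.sum_sub_distrib, ← Finset.mul_sum,
      Finset.sum_const, Finset.card_univ, Fintype.card_fin, nsmul_eq_mul]
    rw [hm', hPdef]
    field_simp
  have key : ∑ i, U θ i * (U θopt i / P)
      = m + (1 / P) * ∑ i, (U θ i - m) * (U θopt i - m') := by
    rw [hcov]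
    have : ∑ i, U θ i * (U θopt i / P) = (∑ i, U θ i * U θopt i) / P := by
      rw [Finset.sum_div]; exact Finset.sum_congr rfl (fun i _ => by ring)
    rw [this, hm, hm']
    field_simp
    ring
  have hCS : ∑ i, (U θ i - m) * (U θopt i - m')
      ≤ Real.sqrt ((∑ i, (U θ i - m) ^ 2) * (∑ i, (U θopt i - m') ^ 2)) := by
    calc ∑ i, (U θ i - m) * (U θopt i - m')
        ≤ Real.sqrt ((∑ i, (U θ i - m) * (U θopt i - m')) ^ 2) := by
          rw [Real.sqrt_sq_eq_abs]; exact le_abs_self _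
      _ ≤ Real.sqrt ((∑ i, (U θ i - m) ^ 2) * (∑ i, (U θopt i - m') ^ 2)) :=
          Real.sqrt_le_sqrt (Finset.sum_mul_sq_le_sq_mul_sq Finset.univ
            (fun i => U θ i - m) (fun i => U θopt i - m'))
  have hm_le : m ≤ (1 / N) * ∑ i, U θopt i := hmax θ
  rw [key]
  have hPinv : (0:ℝ) ≤ 1 / P := by positivity
  gcongr
end

section
/- Let Θ be a type, N ≥ 1, U : Θ → Fin N → ℝ, and θ̃ ∈ Θ with P = ∑ᵢ U_θ̃(i) > 0; set pᵢ = U_θ̃(i)/P. Suppose (i) θ̃ maximizes θ ↦ 𝒰(θ) = (1/N)·∑ᵢ U_θ(i), and (ii) for all θ ∈ Θ, Ĉov[U_θ, U_θ̃] ≤ V̂ar[U_θ̃]. Then θ̃ maximizes θ ↦ 𝒰_p(θ) = ∑ᵢ U_θ(i)·pᵢ, and for every θ ∈ Θ, 𝒰_p(θ̃) − 𝒰_p(θ) ≥ 𝒰(θ̃) − 𝒰(θ) (Proposition 1 of the paper). -/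
lemma cov_expand {N : ℕ} (hN : 1 ≤ N) (a b : Fin N → ℝ) :
    ∑ i, (a i - (1 / N) * ∑ j, a j) * (b i - (1 / N) * ∑ j, b j)
      = ∑ i, a i * b i - (1 / N) * (∑ j, a j) * (∑ j, b j) := by
  have hNne : (N : ℝ) ≠ 0 := by positivity
  have hcard : ∑ _i : Fin N, (1:ℝ) = (N : ℝ) := by simp
  simp only [sub_mul, mul_sub, Finset.sum_sub_distrib, ← Finset.sum_mul, ← Finset.mul_sum]
  field_simp
  have h1 : ∑ _x : Fin N, (1:ℝ) / N = 1 := by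
    rw [Finset.sum_const, Finset.card_univ, Fintype.card_fin, nsmul_eq_mul]; field_simp
  rw [h1]; ring

/-- Proposition 1: with the self-taught prior `pᵢ = U_θ̃(i)/P`, if `θ̃` maximizes
the plain objective and `Cov[U_θ, U_θ̃] ≤ Var[U_θ̃]` for all `θ`, then `θ̃` also
maximizes the curriculum objective, and its curriculum gain dominates its plain gain. -/
theorem selfTaught_curriculum_proposition
    {Θ : Type*} (N : ℕ) (hN : 1 ≤ N) (U : Θ → Fin N → ℝ) (θopt : Θ)
    (hP : 0 < ∑ i, U θopt i)
    (hmax : ∀ θ : Θ, (1 / N) * (∑ i, U θ i) ≤ (1 / N) * (∑ i, U θopt i))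
    (hcov : ∀ θ : Θ,
      ∑ i, (U θ i - (1 / N) * ∑ j, U θ j) *
          (U θopt i - (1 / N) * ∑ j, U θopt j) ≤
        ∑ i, (U θopt i - (1 / N) * ∑ j, U θopt j) ^ 2) :
    (∀ θ : Θ,
      ∑ i, U θ i * (U θopt i / (∑ j, U θopt j)) ≤
        ∑ i, U θopt i * (U θopt i / (∑ j, U θopt j))) ∧
    (∀ θ : Θ,
      (∑ i, U θopt i * (U θopt i / (∑ j, U θopt j))) -
          (∑ i, U θ i * (U θopt i / (∑ j, U θopt j))) ≥
        (1 / N) * (∑ i, U θopt i) - (1 / N) * (∑ i, U θ i)) := by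
  set P := ∑ j, U θopt j with hPdef
  have hPne : P ≠ 0 := ne_of_gt hP
  -- key identity: 𝒰_p(θ) = mean θ + Cov/P
  have key : ∀ θ : Θ, ∑ i, U θ i * (U θopt i / P)
      = (1 / N) * (∑ i, U θ i)
        + (1 / P) * ∑ i, (U θ i - (1 / N) * ∑ j, U θ j) *
            (U θopt i - (1 / N) * ∑ j, U θopt j) := by
    intro θ
    rw [cov_expand hN]
    have : ∑ i, U θ i * (U θopt i / P) = (∑ i, U θ i * U θopt i) / P := by
      rw [Finset.sum_div]; exact Finset.sum_congr rfl fun i _ => by ring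
    rw [this]
    field_simp
    ring
  have gain : ∀ θ : Θ,
      (∑ i, U θopt i * (U θopt i / P)) - (∑ i, U θ i * (U θopt i / P)) ≥
        (1 / N) * (∑ i, U θopt i) - (1 / N) * (∑ i, U θ i) := by
    intro θ
    rw [key θ, key θopt]
    have hc := hcov θ
    have hvar : ∑ i, (U θopt i - (1 / N) * ∑ j, U θopt j) ^ 2
        = ∑ i, (U θopt i - (1 / N) * ∑ j, U θopt j) *
            (U θopt i - (1 / N) * ∑ j, U θopt j) := by
      exact Finset.sum_congr rfl fun i _ => sq _
    rw [hvar] at hc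
    have hPinv : (0:ℝ) ≤ 1 / P := by positivity
    nlinarith [mul_le_mul_of_nonneg_left hc hPinv]
  refine ⟨fun θ => ?_, gain⟩
  have := gain θ
  have := hmax θ
  linarith
end

section
/- Let Θ be a type, N ≥ 1, U : Θ → Fin N → ℝ, and θ̃ ∈ Θ with P = ∑ᵢ U_θ̃(i) > 0; set pᵢ = U_θ̃(i)/P and 𝒰_p(θ) = ∑ᵢ U_θ(i)·pᵢ. If θ̃ maximizes θ ↦ 𝒰(θ) = (1/N)·∑ᵢ U_θ(i), then for every θ ∈ Θ, 𝒰_p(θ̃) − 𝒰_p(θ) ≥ (1/P)·(V̂ar[U_θ̃] − Ĉov[U_θ, U_θ̃]). In particular, the advantage of the curriculum objective at the optimum over any other parameter is bounded below by (1/P) times the gap between the variance of the optimal scores and the covariance of the current scores with the optimal scores (quantitative claim behind the objective of Section 3.2 and Theorem 4 of the paper). -/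
lemma sum_sub_mul_sub {N : ℕ} (f g : Fin N → ℝ) (c d : ℝ) :
    ∑ i, (f i - c) * (g i - d) =
      (∑ i, f i * g i) - c * (∑ i, g i) - d * (∑ i, f i) + N * (c * d) := by
  have h : ∀ i, (f i - c) * (g i - d) = f i * g i - c * g i - d * f i + c * d := by
    intro i; ring
  simp_rw [h]
  rw [Finset.sum_add_distrib, Finset.sum_sub_distrib, Finset.sum_sub_distrib,
    ← Finset.mul_sum, ← Finset.mul_sum, Finset.sum_const, Finset.card_univ,
    Fintype.card_fin, nsmul_eq_mul]

/-- Quantitative curriculum advantage: with the self-taught prior, if `θ̃`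
maximizes the plain objective, the advantage of the curriculum objective at `θ̃`
over any `θ` is at least `(1/P)·(Var[U_θ̃] − Cov[U_θ, U_θ̃])`. -/
theorem selfTaught_curriculum_advantage
    {Θ : Type*} (N : ℕ) (hN : 1 ≤ N) (U : Θ → Fin N → ℝ) (θopt : Θ)
    (hP : 0 < ∑ i, U θopt i)
    (hmax : ∀ θ : Θ, (1 / N) * (∑ i, U θ i) ≤ (1 / N) * (∑ i, U θopt i)) :
    ∀ θ : Θ,
      (∑ i, U θopt i * (U θopt i / (∑ j, U θopt j))) -
          (∑ i, U θ i * (U θopt i / (∑ j, U θopt j))) ≥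
        (1 / (∑ j, U θopt j)) *
          ((∑ i, (U θopt i - (1 / N) * ∑ j, U θopt j) ^ 2) -
            ∑ i, (U θ i - (1 / N) * ∑ j, U θ j) *
              (U θopt i - (1 / N) * ∑ j, U θopt j)) := by
  intro θ
  set s : ℝ := ∑ j, U θopt j with hs
  set t : ℝ := ∑ j, U θ j with htdef
  have hNpos : (0 : ℝ) < N := by exact_mod_cast Nat.lt_of_lt_of_le Nat.zero_lt_one hN
  have hNne : (N : ℝ) ≠ 0 := ne_of_gt hNpos
  have hsne : s ≠ 0 := ne_of_gt hP
  have ht : t ≤ s := by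
    have := hmax θ
    have h1N : (0 : ℝ) < 1 / N := by positivity
    exact le_of_mul_le_mul_left this h1N
  have h1 : ∑ i, U θopt i * (U θopt i / s) = (∑ i, U θopt i * U θopt i) / s := by
    rw [Finset.sum_div]; exact Finset.sum_congr rfl fun i _ => (mul_div_assoc _ _ _).symm
  have h2 : ∑ i, U θ i * (U θopt i / s) = (∑ i, U θ i * U θopt i) / s := by
    rw [Finset.sum_div]; exact Finset.sum_congr rfl fun i _ => (mul_div_assoc _ _ _).symm
  have h3 : ∑ i, (U θopt i - (1 / N) * s) ^ 2 =
      (∑ i, U θopt i * U θopt i) - (1 / N) * s * s - (1 / N) * s * s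
        + N * ((1 / N) * s * ((1 / N) * s)) := by
    simp_rw [sq]
    exact sum_sub_mul_sub (U θopt) (U θopt) _ _
  have h4 : ∑ i, (U θ i - (1 / N) * t) * (U θopt i - (1 / N) * s) =
      (∑ i, U θ i * U θopt i) - (1 / N) * t * s - (1 / N) * s * t
        + N * ((1 / N) * t * ((1 / N) * s)) := by
    exact sum_sub_mul_sub (U θ) (U θopt) _ _
  rw [h1, h2, h3, h4, ge_iff_le, ← sub_nonneg]
  have key : (∑ i, U θopt i * U θopt i) / s - (∑ i, U θ i * U θopt i) / s -
      (1 / s) * (((∑ i, U θopt i * U θopt i) - (1 / N) * s * s - (1 / N) * s * s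
          + N * ((1 / N) * s * ((1 / N) * s))) -
        ((∑ i, U θ i * U θopt i) - (1 / N) * t * s - (1 / N) * s * t
          + N * ((1 / N) * t * ((1 / N) * s)))) = (s - t) / N := by
    field_simp
    ring
  rw [key]
  exact div_nonneg (sub_nonneg.mpr ht) (le_of_lt hNpos)
end
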